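/- Fix positive integers g and a. For every ε > 0 there exists an integer d₀ such that for all d ≥ d₀ and every subgroup H of (ℤ/dℤ)ˣ of index at most 2g, one has |(1/|H|) Σ_{b∈H} e^{2πiab/d}| < ε. -/

import Mathlib

open Complex Finset

/-! ### Auxiliary lemmas -/

lemma weyl_aux_lt_sqrt (x y : ℝ) (hy : 0 ≤ y) (h : x^2 < y) : x < Real.sqrt y := by
  rcases le_or_gt x 0 with hx | hx
  · exact lt_of_le_of_lt hx (Real.sqrt_pos.mpr (lt_of_le_of_lt (sq_nonneg x) h))
  · rw [show y = Real.sqrt y ^ 2 from (Real.sq_sqrt hy).symm] at h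
    exact lt_of_pow_lt_pow_left₀ 2 (Real.sqrt_nonneg y) h

lemma weyl_aux_le_sqrt (x y : ℝ) (hx : 0 ≤ x) (h : x^2 ≤ y) : x ≤ Real.sqrt y :=
  (Real.le_sqrt hx (le_trans (sq_nonneg x) h)).mpr h

lemma weyl_aux_prod_bound (S : Finset ℕ) (hS : ∀ p ∈ S, 2 ≤ p) :
    (1 : ℝ) / (S.card + 1) ≤ ∏ p ∈ S, (1 - (p:ℝ)⁻¹) := by
  induction S using Finset.induction_on_max with
  | empty => simp
  | insert a s ha ih =>
    have h2 : 2 ≤ a := hS a (Finset.mem_insert_self a s)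
    have hs2 : ∀ p ∈ s, 2 ≤ p := fun p hp => hS p (Finset.mem_insert_of_mem hp)
    have hsub : s ⊆ Finset.Ico 2 a := fun x hx =>
      Finset.mem_Ico.2 ⟨hs2 x hx, ha x hx⟩
    have hcard : s.card ≤ a - 2 := by
      simpa using Finset.card_le_card hsub
    have has : a ∉ s := fun h => lt_irrefl a (ha a h)
    rw [Finset.prod_insert has]
    have hka : (s.card : ℝ) + 2 ≤ a := by
      have : s.card + 2 ≤ a := by omega
      exact_mod_cast this
    have hapos : (0:ℝ) < a := by positivity
    have ih' := ih hs2
    have h1 : (0:ℝ) ≤ 1 - (a:ℝ)⁻¹ := by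
      rw [sub_nonneg, inv_le_one_iff₀]
      right; exact_mod_cast le_trans (by norm_num) h2
    calc (1:ℝ) / ((insert a s).card + 1)
        ≤ (1 - (a:ℝ)⁻¹) * (1 / (s.card + 1)) := by
          rw [Finset.card_insert_of_notMem has]
          have heq : (1 - (a:ℝ)⁻¹) * (1/(s.card+1)) = (a-1)/(a*(s.card+1)) := by
            field_simp
          rw [heq, div_le_div_iff₀ (by positivity) (by positivity)]
          push_cast
          nlinarith [hka]
      _ ≤ (1 - (a:ℝ)⁻¹) * ∏ p ∈ s, (1 - (p:ℝ)⁻¹) := by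
          exact mul_le_mul_of_nonneg_left ih' h1

lemma weyl_aux_two_pow_le (n : ℕ) (hn : 0 < n) : 2 ^ n.primeFactors.card ≤ n := by
  calc 2 ^ n.primeFactors.card = ∏ _p ∈ n.primeFactors, 2 := by
        rw [Finset.prod_const]
    _ ≤ ∏ p ∈ n.primeFactors, p :=
        Finset.prod_le_prod (by intros; norm_num)
          (fun p hp => (Nat.prime_of_mem_primeFactors hp).two_le)
    _ ≤ n := Nat.le_of_dvd hn (Nat.prod_primeFactors_dvd n)

lemma weyl_aux_totient_lower (n : ℕ) :
    (n:ℝ) / (n.primeFactors.card + 1) ≤ n.totient := by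
  have hlow := weyl_aux_prod_bound n.primeFactors
    (fun p hp => (Nat.prime_of_mem_primeFactors hp).two_le)
  have h := Nat.totient_eq_mul_prod_factors n
  have h' : (n.totient : ℝ) = n * ∏ p ∈ n.primeFactors, (1 - (p:ℝ)⁻¹) := by
    have := congrArg (Rat.cast : ℚ → ℝ) h
    push_cast at this
    exact_mod_cast this
  rw [h', div_eq_mul_one_div]
  exact mul_le_mul_of_nonneg_left hlow (Nat.cast_nonneg n)

lemma weyl_aux_exp_growth (M : ℕ) : ∃ N : ℕ, ∀ k ≥ N, M * (k+1)^2 < 2^k := by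
  have ho : (fun k : ℕ => ((k:ℝ))^2) =o[Filter.atTop] (fun k : ℕ => (2:ℝ)^k) :=
    isLittleO_pow_const_const_pow_of_one_lt 2 (by norm_num)
  have hc : (0:ℝ) < 1 / (4*M+4) := by positivity
  have hev := (ho.def hc).and (Filter.eventually_ge_atTop 1)
  rw [Filter.eventually_atTop] at hev
  obtain ⟨N, hN⟩ := hev
  refine ⟨N, fun k hk => ?_⟩
  obtain ⟨h1, h2⟩ := hN k hk
  have h2p : (0:ℝ) < 2^k := by positivity
  rw [Real.norm_eq_abs, Real.norm_eq_abs, _root_.abs_of_nonneg (by positivity),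
    _root_.abs_of_nonneg (by positivity)] at h1
  have hk1 : ((k:ℝ)+1)^2 ≤ 4 * (k:ℝ)^2 := by
    have : (1:ℝ) ≤ (k:ℝ) := by exact_mod_cast h2
    nlinarith
  have key : (M:ℝ) * ((k:ℝ)+1)^2 < 2^k := by
    calc (M:ℝ) * ((k:ℝ)+1)^2 ≤ (M:ℝ) * (4 * (k:ℝ)^2) :=
          mul_le_mul_of_nonneg_left hk1 (Nat.cast_nonneg M)
      _ ≤ (M:ℝ) * (4 * (1/(4*M+4) * 2^k)) := by
          have := mul_le_mul_of_nonneg_left h1 (by norm_num : (0:ℝ) ≤ 4)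
          exact mul_le_mul_of_nonneg_left this (Nat.cast_nonneg M)
      _ < 2^k := by
          rw [show (M:ℝ) * (4 * (1/(4*M+4) * 2^k)) = (4*M/(4*M+4)) * 2^k by ring]
          have h4 : (4*(M:ℝ)/(4*M+4)) < 1 := by
            rw [div_lt_one (by positivity)]; linarith
          nlinarith
  exact_mod_cast (by push_cast; exact key : ((M * (k+1)^2 : ℕ) : ℝ) < ((2^k : ℕ) : ℝ))

lemma weyl_aux_conj_std {d : ℕ} [NeZero d] (x : ZMod d) :
    (starRingEnd ℂ) (ZMod.stdAddChar x) = ZMod.stdAddChar (-x) := by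
  rw [ZMod.stdAddChar_apply, ZMod.stdAddChar_apply, AddChar.map_neg_eq_inv]
  simp [← Circle.coe_inv_eq_conj]

lemma weyl_aux_coe_inj {d : ℕ} {H : Subgroup (ZMod d)ˣ} {b c : H}
    (h : ((b : (ZMod d)ˣ) : ZMod d) = ((c : (ZMod d)ˣ) : ZMod d)) : b = c :=
  Subtype.ext (Units.ext h)

lemma weyl_aux_step2 {d : ℕ} [NeZero d] (H : Subgroup (ZMod d)ˣ) [Fintype H]
    (T : ZMod d → ℂ)
    (hT : T = fun u => ∑ b : H, ZMod.stdAddChar (u * ((b : (ZMod d)ˣ) : ZMod d))) :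
    ∑ u : ZMod d, Complex.normSq (T u) = d * Fintype.card H := by
  have main : ∑ u : ZMod d, (Complex.normSq (T u) : ℂ) = (d : ℂ) * Fintype.card H := by
    have expand : ∀ u : ZMod d, (Complex.normSq (T u) : ℂ) =
        ∑ b : H, ∑ c : H, ZMod.stdAddChar
          (u * (((b : (ZMod d)ˣ) : ZMod d) - ((c : (ZMod d)ˣ) : ZMod d))) := by
      intro u
      rw [← Complex.mul_conj, hT]
      rw [map_sum, Finset.sum_mul_sum]
      refine Finset.sum_congr rfl fun b _ => Finset.sum_congr rfl fun c _ => ?_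
      rw [weyl_aux_conj_std, ← AddChar.map_add_eq_mul]
      congr 1
      ring
    calc ∑ u : ZMod d, (Complex.normSq (T u) : ℂ)
        = ∑ b : H, ∑ c : H, ∑ u : ZMod d, ZMod.stdAddChar
            (u * (((b : (ZMod d)ˣ) : ZMod d) - ((c : (ZMod d)ˣ) : ZMod d))) := by
          simp only [expand]
          rw [Finset.sum_comm]
          exact Finset.sum_congr rfl fun b _ => Finset.sum_comm
      _ = ∑ b : H, ∑ c : H,
            (if (((b : (ZMod d)ˣ) : ZMod d) - ((c : (ZMod d)ˣ) : ZMod d)) = 0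
             then (d:ℂ) else 0) := by
          refine Finset.sum_congr rfl fun b _ => Finset.sum_congr rfl fun c _ => ?_
          rw [AddChar.sum_mulShift _ (ZMod.isPrimitive_stdAddChar d), ZMod.card d]
          split <;> simp
      _ = ∑ _b : H, (d : ℂ) := by
          refine Finset.sum_congr rfl fun b _ => ?_
          refine Finset.sum_eq_single_of_mem b (Finset.mem_univ b) (fun c _ hc => ?_) |>.trans ?_
          · rw [if_neg]
            intro h
            exact hc (weyl_aux_coe_inj (sub_eq_zero.mp h)).symm
          · rw [if_pos (by rw [sub_self])]
      _ = (d : ℂ) * Fintype.card H := by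
          rw [Finset.sum_const, Finset.card_univ]
          simp [mul_comm]
  exact_mod_cast main

lemma weyl_aux_step3 {d : ℕ} [NeZero d] (H : Subgroup (ZMod d)ˣ) [Fintype H]
    (u : ZMod d) (h : H) :
    ∑ b : H, ZMod.stdAddChar ((u * ((h : (ZMod d)ˣ) : ZMod d)) * ((b : (ZMod d)ˣ) : ZMod d))
      = ∑ b : H, ZMod.stdAddChar (u * ((b : (ZMod d)ˣ) : ZMod d)) := by
  rw [← Equiv.sum_comp (Equiv.mulLeft h) (fun b : H =>
    ZMod.stdAddChar (u * ((b : (ZMod d)ˣ) : ZMod d)))]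
  refine Finset.sum_congr rfl fun b _ => ?_
  congr 1
  show u * _ * _ = u * _
  push_cast [Equiv.coe_mulLeft]
  ring

lemma weyl_aux_step4 {d : ℕ} [NeZero d] (H : Subgroup (ZMod d)ˣ) [Fintype H] {a : ℕ}
    (ha : 0 < a) :
    Fintype.card H ≤ a *
      (Finset.univ.image (fun b : H => (a : ZMod d) * ((b : (ZMod d)ˣ) : ZMod d))).card := by
  have hd : 0 < d := Nat.pos_of_ne_zero (NeZero.ne d)
  rw [← Finset.card_univ]
  refine Finset.card_le_mul_card_image _ _ (fun y hy => ?_)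
  obtain ⟨b₀, -, hb₀⟩ := Finset.mem_image.mp hy
  set F := Finset.univ.filter
    (fun b : H => (a : ZMod d) * ((b : (ZMod d)ˣ) : ZMod d) = y) with hF
  have hdvd : ∀ b ∈ F, d ∣ a * (((b : (ZMod d)ˣ) : ZMod d)
      - ((b₀ : (ZMod d)ˣ) : ZMod d)).val := by
    intro b hb
    rw [← ZMod.natCast_eq_zero_iff]
    push_cast
    rw [ZMod.natCast_zmod_val, mul_sub]
    rw [hF, Finset.mem_filter] at hb
    rw [hb.2, hb₀, sub_self]
  have hcard : F.card ≤ (Finset.range a).card := by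
    refine Finset.card_le_card_of_injOn
      (fun b => a * (((b : (ZMod d)ˣ) : ZMod d) - ((b₀ : (ZMod d)ˣ) : ZMod d)).val / d)
      (fun b hb => ?_) (fun b hb c hc hbc => ?_)
    · rw [Finset.mem_coe, Finset.mem_range, Nat.div_lt_iff_lt_mul hd]
      exact mul_lt_mul_of_pos_left (ZMod.val_lt _) ha
    · have h1 := Nat.div_mul_cancel (hdvd b hb)
      have h2 := Nat.div_mul_cancel (hdvd c hc)
      have heq : a * (((b : (ZMod d)ˣ) : ZMod d) - ((b₀ : (ZMod d)ˣ) : ZMod d)).val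
          = a * (((c : (ZMod d)ˣ) : ZMod d) - ((b₀ : (ZMod d)ˣ) : ZMod d)).val := by
        rw [← h1, ← h2]
        exact congrArg (· * d) hbc
      have hval := Nat.eq_of_mul_eq_mul_left ha heq
      have heq2 : (((b : (ZMod d)ˣ) : ZMod d) - ((b₀ : (ZMod d)ˣ) : ZMod d))
          = (((c : (ZMod d)ˣ) : ZMod d) - ((b₀ : (ZMod d)ˣ) : ZMod d)) :=
        ZMod.val_injective d hval
      exact weyl_aux_coe_inj (by linear_combination heq2)
  simpa using hcard

lemma weyl_aux_key {d : ℕ} [NeZero d] (H : Subgroup (ZMod d)ˣ) [Fintype H] {a : ℕ}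
    (ha : 0 < a) :
    (‖∑ b : H, ZMod.stdAddChar ((a : ZMod d) * ((b : (ZMod d)ˣ) : ZMod d))‖) ^ 2
      ≤ (a : ℝ) * d := by
  set T : ZMod d → ℂ := fun u => ∑ b : H, ZMod.stdAddChar (u * ((b : (ZMod d)ˣ) : ZMod d))
    with hT
  set f : H → ZMod d := fun b => (a : ZMod d) * ((b : (ZMod d)ˣ) : ZMod d) with hf
  set S : Finset (ZMod d) := Finset.univ.image f with hS
  have hTS : ∀ y ∈ S, T y = T (a : ZMod d) := by
    intro y hy
    obtain ⟨h, -, hh⟩ := Finset.mem_image.mp hy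
    rw [← hh]
    exact weyl_aux_step3 H (a : ZMod d) h
  have hSpos : 0 < S.card := by
    rw [hS, Finset.card_pos]
    exact (Finset.univ_nonempty).image f
  have chain : (S.card : ℝ) * (‖T (a : ZMod d)‖)^2 ≤ (d : ℝ) * (a * S.card) := by
    calc (S.card : ℝ) * (‖T (a : ZMod d)‖)^2
        = ∑ y ∈ S, (‖T y‖)^2 := by
          rw [Finset.sum_congr rfl (fun y hy => by rw [hTS y hy]), Finset.sum_const,
            nsmul_eq_mul]
      _ ≤ ∑ u : ZMod d, (‖T u‖)^2 := by
          refine Finset.sum_le_sum_of_subset_of_nonneg (Finset.subset_univ S)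
            (fun u _ _ => by positivity)
      _ = (d : ℝ) * Fintype.card H := by
          simp_rw [Complex.sq_norm]
          exact weyl_aux_step2 H T hT
      _ ≤ (d : ℝ) * (a * S.card) := by
          have h4 := weyl_aux_step4 H (a := a) ha
          have h4' : (Fintype.card H : ℝ) ≤ a * S.card := by exact_mod_cast h4
          exact mul_le_mul_of_nonneg_left h4' (Nat.cast_nonneg d)
  exact le_of_mul_le_mul_left (by
    calc (S.card : ℝ) * (‖T (a : ZMod d)‖)^2 ≤ (d : ℝ) * (a * S.card) := chain
      _ = (S.card : ℝ) * (a * d) := by ring)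
    (by exact_mod_cast hSpos : (0:ℝ) < S.card)

/-- Weyl sum estimate: fix positive integers `g` and `a`.  For every `ε > 0` there is
`d₀` such that for all `d ≥ d₀` and every subgroup `H ≤ (ℤ/dℤ)ˣ` of index at most
`2g`, the normalized sum `|(1/|H|) Σ_{b∈H} e^{2πiab/d}|` is less than `ε`. -/
theorem stmt5 (g a : ℕ) (hg : 0 < g) (ha : 0 < a) :
    ∀ ε : ℝ, 0 < ε → ∃ d₀ : ℕ, ∀ d : ℕ, d₀ ≤ d →
      ∀ H : Subgroup (ZMod d)ˣ, H.index ≤ 2 * g →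
        ‖(1 / (Nat.card H : ℂ)) *
            ∑ᶠ b : H, Complex.exp (2 * Real.pi * I * a * ((b : (ZMod d)ˣ) : ZMod d).val / d)‖
          < ε := by
  intro ε hε
  have hgR : (1:ℝ) ≤ g := by exact_mod_cast hg
  have haR : (1:ℝ) ≤ a := by exact_mod_cast ha
  have hsqa : 0 < Real.sqrt a := Real.sqrt_pos.mpr (by linarith)
  set K : ℝ := 2 * g * Real.sqrt a / ε with hK
  have hKpos : 0 < K := by positivity
  obtain ⟨M, hMK⟩ : ∃ M : ℕ, K^2 < (M:ℝ) :=
    ⟨⌈K^2⌉₊ + 1, by push_cast; linarith [Nat.le_ceil (K^2)]⟩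
  obtain ⟨N, hN⟩ := weyl_aux_exp_growth M
  refine ⟨M * (N+1)^2 + 1, fun d hd H hHidx => ?_⟩
  have hd1 : 1 ≤ d := le_trans (Nat.le_add_left 1 _) hd
  haveI : NeZero d := ⟨by omega⟩
  haveI : Fintype H := Fintype.ofFinite H
  -- `d` beats `M * (ω+1)^2` where ω is the number of prime factors of d
  have hdω : M * (d.primeFactors.card + 1)^2 < d := by
    rcases le_or_gt N d.primeFactors.card with h | h
    · exact lt_of_lt_of_le (hN d.primeFactors.card h) (weyl_aux_two_pow_le d (by omega))
    · calc M * (d.primeFactors.card + 1)^2 ≤ M * (N+1)^2 :=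
            Nat.mul_le_mul_left M (Nat.pow_le_pow_left (by omega) 2)
        _ < d := by omega
  obtain ⟨w, hwdef⟩ : ∃ w : ℝ, w = (d.primeFactors.card : ℝ) + 1 := ⟨_, rfl⟩
  have hw1 : (1:ℝ) ≤ w := by
    rw [hwdef]
    have := Nat.cast_nonneg (α := ℝ) d.primeFactors.card
    linarith
  have hdωR : (M:ℝ) * w^2 < d := by
    rw [hwdef]
    exact_mod_cast hdω
  have hsqrt : K * w < Real.sqrt d := by
    apply weyl_aux_lt_sqrt _ _ (Nat.cast_nonneg d)
    nlinarith [sq_nonneg w]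
  -- totient lower bound
  have htot : (d:ℝ) ≤ (Nat.totient d : ℝ) * w := by
    rw [hwdef]
    have h := weyl_aux_totient_lower d
    rw [div_le_iff₀ (by positivity : (0:ℝ) < (d.primeFactors.card : ℝ) + 1)] at h
    exact h
  have htotpos : 0 < Nat.totient d := Nat.totient_pos.mpr (by omega)
  -- cardinality of H
  have hcard_eq : Nat.card H * H.index = Nat.totient d := by
    rw [Subgroup.card_mul_index, Nat.card_eq_fintype_card, ZMod.card_units_eq_totient]
  have hcardpos : 0 < Nat.card H := Nat.card_pos
  have hcard2 : (Nat.totient d : ℝ) ≤ (Nat.card H : ℝ) * (2*g) := by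
    have h1 : Nat.totient d ≤ Nat.card H * (2*g) := by
      rw [← hcard_eq]
      exact Nat.mul_le_mul_left _ hHidx
    exact_mod_cast h1
  have hcardposR : (0:ℝ) < (Nat.card H : ℝ) := by exact_mod_cast hcardpos
  -- rewrite the sum
  have hsum : (∑ᶠ b : H, Complex.exp (2 * Real.pi * I * a * ((b : (ZMod d)ˣ) : ZMod d).val / d))
      = ∑ b : H, ZMod.stdAddChar ((a : ZMod d) * ((b : (ZMod d)ˣ) : ZMod d)) := by
    rw [finsum_eq_sum_of_fintype]
    refine Finset.sum_congr rfl fun b _ => ?_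
    have harg : ((a : ZMod d) * ((b : (ZMod d)ˣ) : ZMod d))
        = (((a * (((b : (ZMod d)ˣ) : ZMod d)).val : ℕ) : ℤ) : ZMod d) := by
      push_cast
      rw [ZMod.natCast_zmod_val]
    rw [harg, ZMod.stdAddChar_coe]
    congr 1
    push_cast
    ring
  rw [hsum, norm_mul, norm_div, norm_one, Complex.norm_natCast, one_div, inv_mul_eq_div,
    div_lt_iff₀ hcardposR]
  -- the key estimate
  have hkey : ‖∑ b : H, ZMod.stdAddChar ((a : ZMod d) * ((b : (ZMod d)ˣ) : ZMod d))‖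
      ≤ Real.sqrt ((a:ℝ) * d) :=
    weyl_aux_le_sqrt _ _ (norm_nonneg _) (weyl_aux_key H ha)
  have hsqd : (0:ℝ) < Real.sqrt d := Real.sqrt_pos.mpr (by exact_mod_cast hd1)
  have hmulself : Real.sqrt d * Real.sqrt d = (d:ℝ) :=
    Real.mul_self_sqrt (Nat.cast_nonneg d)
  have hsplit : Real.sqrt ((a:ℝ) * d) = Real.sqrt a * Real.sqrt d :=
    Real.sqrt_mul (Nat.cast_nonneg a) _
  have hstep1 : 2 * (g:ℝ) * Real.sqrt a * w < ε * Real.sqrt d := by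
    have h := hsqrt
    rw [hK, div_mul_eq_mul_div, div_lt_iff₀ hε] at h
    linarith
  have hstep2 : 2 * (g:ℝ) * Real.sqrt a * w * Real.sqrt d < ε * d := by
    have h := mul_lt_mul_of_pos_right hstep1 hsqd
    calc 2 * (g:ℝ) * Real.sqrt a * w * Real.sqrt d < ε * Real.sqrt d * Real.sqrt d := h
      _ = ε * d := by rw [mul_assoc, hmulself]
  -- chain of inequalities
  calc ‖∑ b : H, ZMod.stdAddChar ((a : ZMod d) * ((b : (ZMod d)ˣ) : ZMod d))‖
      ≤ Real.sqrt a * Real.sqrt d := by rw [← hsplit]; exact hkey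
    _ < ε * Nat.card H := by
        have h2gw : (0:ℝ) < 2 * g * w := by positivity
        rw [← mul_lt_mul_iff_of_pos_right h2gw]
        have hc1 : Real.sqrt a * Real.sqrt d * (2*g*w) < ε * d := by
          rw [show Real.sqrt a * Real.sqrt d * (2*(g:ℝ)*w)
              = 2 * (g:ℝ) * Real.sqrt a * w * Real.sqrt d from by ring]
          exact hstep2
        have hc2 : ε * (d:ℝ) ≤ ε * ((Nat.totient d : ℝ) * w) :=
          mul_le_mul_of_nonneg_left htot (le_of_lt hε)
        have hc3 : ε * ((Nat.totient d : ℝ) * w) ≤ ε * ((Nat.card H : ℝ) * (2*g) * w) :=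
          mul_le_mul_of_nonneg_left
            (mul_le_mul_of_nonneg_right hcard2 (by linarith : (0:ℝ) ≤ w)) (le_of_lt hε)
        calc Real.sqrt a * Real.sqrt d * (2*g*w) < ε * d := hc1
          _ ≤ ε * ((Nat.totient d : ℝ) * w) := hc2
          _ ≤ ε * ((Nat.card H : ℝ) * (2*g) * w) := hc3
          _ = ε * Nat.card H * (2*g*w) := by ring
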